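/- arXiv:0704.2680 — 2 statements merged into one kernel-verified Lean document; each statement's English description precedes it below -/
import Mathlib

section
/- Let μ₁, μ₂ ∈ ℝ and σ₁², σ₂² > 0. The Kullback–Leibler divergence between the Gaussian distributions N(μ₁, σ₁²) and N(μ₂, σ₂²) equals (1/2)·log(σ₂²/σ₁²) + (1/2)·(σ₁²/σ₂² − 1) + (μ₁−μ₂)²/(2σ₂²). -/
open MeasureTheory ProbabilityTheory
open scoped ENNReal NNReal

/- Kullback–Leibler divergence `D(P‖Q) = ∫ log (dP/dQ) dP`, infinite if `P` is not
absolutely continuous w.r.t. `Q` or if the log-likelihood ratio is not integrable. -/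
open Classical in
noncomputable def klDiv {X : Type*} [MeasurableSpace X] (P Q : Measure X) : ℝ≥0∞ :=
  if P ≪ Q ∧ Integrable (fun x => Real.log ((P.rnDeriv Q x).toReal)) P
  then ENNReal.ofReal (∫ x, Real.log ((P.rnDeriv Q x).toReal) ∂P)
  else ⊤

open Real

lemma integrable_quad_mul_exp {t : ℝ} (ht : 0 < t) (a b c : ℝ) :
    Integrable (fun y : ℝ => (a * y ^ 2 + b * y + c) * rexp (-t * y ^ 2)) := by
  have h2 : Integrable (fun y : ℝ => y ^ 2 * rexp (-t * y ^ 2)) := by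
    have := integrable_rpow_mul_exp_neg_mul_sq ht (s := 2) (by norm_num)
    simpa [Real.rpow_two] using this
  have h1 : Integrable (fun y : ℝ => y * rexp (-t * y ^ 2)) := by
    have := integrable_rpow_mul_exp_neg_mul_sq ht (s := 1) (by norm_num)
    simpa [Real.rpow_one] using this
  have h0 : Integrable (fun y : ℝ => rexp (-t * y ^ 2)) := integrable_exp_neg_mul_sq ht
  have h := ((h2.const_mul a).add (h1.const_mul b)).add (h0.const_mul c)
  exact h.congr (Filter.Eventually.of_forall fun y => by simp only [Pi.add_apply]; ring)

lemma integral_sq_mul_exp {t : ℝ} (ht : 0 < t) :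
    ∫ y : ℝ, y ^ 2 * rexp (-t * y ^ 2) = t ^ (-(3:ℝ)/2) * (Real.sqrt π / 2) := by
  have h := integral_rpow_mul_exp_neg_mul_rpow (p := 2) (q := 2) two_pos (by norm_num) ht
  have habs : (∫ y : ℝ, y ^ 2 * rexp (-t * y ^ 2))
      = 2 * ∫ y in Set.Ioi (0:ℝ), y ^ 2 * rexp (-t * y ^ 2) := by
    rw [← integral_comp_abs (f := fun y => y ^ 2 * rexp (-t * y ^ 2))]
    congr 1 with y
    rw [sq_abs]
  rw [habs]
  have hrw : (fun y : ℝ => y ^ 2 * rexp (-t * y ^ 2))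
      = fun y : ℝ => y ^ (2:ℝ) * rexp (-t * y ^ (2:ℝ)) := by
    ext y; rw [Real.rpow_two]
  rw [hrw, h]
  have : ((2:ℝ) + 1) / 2 = 1/2 + 1 := by norm_num
  rw [this, Real.Gamma_add_one (by norm_num), Real.Gamma_one_half_eq]
  ring_nf

lemma gaussianPDFReal_zero_eq {v : ℝ≥0} :
    gaussianPDFReal 0 v = fun y : ℝ => (√(2 * π * v))⁻¹ * rexp (-(2*(v:ℝ))⁻¹ * y ^ 2) := by
  ext y
  rw [gaussianPDFReal]
  congr 1
  rw [sub_zero]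
  ring

lemma integral_id_mul_gaussianPDFReal (v : ℝ≥0) :
    ∫ y : ℝ, y * gaussianPDFReal 0 v y = 0 := by
  have h := integral_neg_eq_self (fun y : ℝ => y * gaussianPDFReal 0 v y) volume
  have h2 : (∫ y : ℝ, (-y) * gaussianPDFReal 0 v (-y))
      = -∫ y : ℝ, y * gaussianPDFReal 0 v y := by
    rw [← integral_neg]
    congr 1 with y
    rw [gaussianPDFReal_zero_eq]
    ring_nf
  rw [h2] at h
  linarith

lemma integrable_id_mul_gaussianPDFReal {v : ℝ≥0} (hv : 0 < v) :
    Integrable (fun y : ℝ => y * gaussianPDFReal 0 v y) := by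
  have ht : (0:ℝ) < (2*(v:ℝ))⁻¹ := by positivity
  have h := (integrable_quad_mul_exp ht 0 1 0).const_mul (√(2 * π * v))⁻¹
  refine h.congr (Filter.Eventually.of_forall fun y => ?_)
  rw [gaussianPDFReal_zero_eq]
  ring

lemma integrable_sq_mul_gaussianPDFReal {v : ℝ≥0} (hv : 0 < v) :
    Integrable (fun y : ℝ => y ^ 2 * gaussianPDFReal 0 v y) := by
  have ht : (0:ℝ) < (2*(v:ℝ))⁻¹ := by positivity
  have h := (integrable_quad_mul_exp ht 1 0 0).const_mul (√(2 * π * v))⁻¹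
  refine h.congr (Filter.Eventually.of_forall fun y => ?_)
  rw [gaussianPDFReal_zero_eq]
  ring

lemma integral_sq_mul_gaussianPDFReal {v : ℝ≥0} (hv : 0 < v) :
    ∫ y : ℝ, y ^ 2 * gaussianPDFReal 0 v y = v := by
  have hv' : (0:ℝ) < v := hv
  have ht : (0:ℝ) < (2*(v:ℝ))⁻¹ := by positivity
  have step : ∫ y : ℝ, y ^ 2 * gaussianPDFReal 0 v y
      = (√(2 * π * v))⁻¹ * ∫ y : ℝ, y ^ 2 * rexp (-(2*(v:ℝ))⁻¹ * y ^ 2) := by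
    rw [← integral_const_mul]
    congr 1 with y
    rw [gaussianPDFReal_zero_eq]
    ring
  rw [step, integral_sq_mul_exp ht]
  -- now pure rpow arithmetic
  have h2v : (0:ℝ) < 2 * v := by positivity
  have hπ := pi_pos
  rw [Real.sqrt_eq_rpow, Real.sqrt_eq_rpow,
    Real.inv_rpow h2v.le, ← Real.rpow_neg h2v.le,
    show -((-3:ℝ)/2) = (3:ℝ)/2 by norm_num,
    ← Real.rpow_neg_one ((2 * π * (v:ℝ)) ^ ((1:ℝ)/2)),
    ← Real.rpow_mul (by positivity : (0:ℝ) ≤ 2 * π * v),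
    show (2:ℝ) * π * (v:ℝ) = (2*v) * π by ring,
    Real.mul_rpow h2v.le hπ.le,
    show ((1:ℝ)/2 * -1) = (-1:ℝ)/2 by norm_num]
  have e1 : (2*(v:ℝ))^((-1:ℝ)/2) * (2*(v:ℝ))^((3:ℝ)/2) = 2*(v:ℝ) := by
    rw [← Real.rpow_add h2v]; norm_num
  have e2 : π^((-1:ℝ)/2) * π^((1:ℝ)/2) = 1 := by
    rw [← Real.rpow_add hπ]; norm_num
  calc (2*(v:ℝ))^((-1:ℝ)/2) * π^((-1:ℝ)/2) * ((2*(v:ℝ))^((3:ℝ)/2) * (π^((1:ℝ)/2)/2))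
      = ((2*(v:ℝ))^((-1:ℝ)/2) * (2*(v:ℝ))^((3:ℝ)/2)) * (π^((-1:ℝ)/2) * π^((1:ℝ)/2)) / 2 := by
        ring
    _ = (v:ℝ) := by rw [e1, e2]; ring

lemma integrable_quad_mul_gaussianPDFReal {v : ℝ≥0} (hv : 0 < v) (m a b c : ℝ) :
    Integrable (fun x : ℝ => (a * x ^ 2 + b * x + c) * gaussianPDFReal m v x) := by
  have ht : (0:ℝ) < (2*(v:ℝ))⁻¹ := by positivity
  have h := ((integrable_quad_mul_exp ht a (2*a*m+b) (a*m^2+b*m+c)).const_mul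
    (√(2 * π * v))⁻¹).comp_sub_right m
  refine h.congr (Filter.Eventually.of_forall fun x => ?_)
  simp only [gaussianPDFReal_def]
  rw [show -(x - m)^2 / (2*(v:ℝ)) = -(2*(v:ℝ))⁻¹ * (x - m)^2 by ring]
  ring

lemma integral_quad_mul_gaussianPDFReal_zero {v : ℝ≥0} (hv : 0 < v) (a b c : ℝ) :
    ∫ y : ℝ, (a * y ^ 2 + b * y + c) * gaussianPDFReal 0 v y = a * v + c := by
  have h2 := (integrable_sq_mul_gaussianPDFReal hv).const_mul a
  have h1 := (integrable_id_mul_gaussianPDFReal hv).const_mul b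
  have h0 := (integrable_gaussianPDFReal 0 v).const_mul c
  have hrw : (fun y : ℝ => (a * y ^ 2 + b * y + c) * gaussianPDFReal 0 v y)
      = fun y => a * (y ^ 2 * gaussianPDFReal 0 v y)
        + (b * (y * gaussianPDFReal 0 v y) + c * gaussianPDFReal 0 v y) := by
    ext y; ring
  have h12 : Integrable (fun y : ℝ => b * (y * gaussianPDFReal 0 v y)
      + c * gaussianPDFReal 0 v y) := h1.add h0
  rw [hrw, integral_add h2 h12, integral_add h1 h0, integral_const_mul,
    integral_const_mul, integral_const_mul, integral_sq_mul_gaussianPDFReal hv,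
    integral_id_mul_gaussianPDFReal, integral_gaussianPDFReal_eq_one 0 hv.ne']
  ring

lemma integral_gaussianReal_shift {μ : ℝ} {v : ℝ≥0} (hv : v ≠ 0) (f : ℝ → ℝ) :
    ∫ x, f x ∂(gaussianReal μ v) = ∫ y, f (y + μ) * gaussianPDFReal 0 v y := by
  rw [gaussianReal_of_var_ne_zero _ hv]
  have hmeq : gaussianPDF μ v
      = fun x => ((Real.toNNReal (gaussianPDFReal μ v x) : ℝ≥0) : ℝ≥0∞) := rfl
  rw [hmeq, integral_withDensity_eq_integral_smul
    ((measurable_gaussianPDFReal μ v).real_toNNReal) f]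
  have : (fun x => (Real.toNNReal (gaussianPDFReal μ v x)) • f x)
      = fun x => (fun y => f (y + μ) * gaussianPDFReal 0 v y) (x - μ) := by
    ext x
    rw [NNReal.smul_def, Real.coe_toNNReal _ (gaussianPDFReal_nonneg μ v x),
      smul_eq_mul]
    show gaussianPDFReal μ v x * f x = f (x - μ + μ) * gaussianPDFReal 0 v (x - μ)
    rw [sub_add_cancel, gaussianPDFReal_sub, zero_add, mul_comm]
  rw [this, integral_sub_right_eq_self (fun y => f (y + μ) * gaussianPDFReal 0 v y) μ]

lemma integrable_gaussianReal_iff {μ : ℝ} {v : ℝ≥0} (hv : v ≠ 0) {f : ℝ → ℝ} :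
    Integrable f (gaussianReal μ v)
      ↔ Integrable (fun x => f x * gaussianPDFReal μ v x) volume := by
  rw [gaussianReal_of_var_ne_zero _ hv,
    integrable_withDensity_iff (measurable_gaussianPDF μ v)
      (ae_of_all _ fun x => ENNReal.ofReal_lt_top)]
  simp_rw [gaussianPDF, ENNReal.toReal_ofReal (gaussianPDFReal_nonneg μ v _)]

lemma log_gaussianPDFReal {v : ℝ≥0} (hv : 0 < v) (m x : ℝ) :
    Real.log (gaussianPDFReal m v x)
      = -Real.log (√(2*π*(v:ℝ))) - (x-m)^2/(2*(v:ℝ)) := by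
  have h0 : (0:ℝ) < √(2*π*(v:ℝ)) := by
    have : (0:ℝ) < 2*π*(v:ℝ) := by positivity
    positivity
  simp only [gaussianPDFReal_def]
  rw [Real.log_mul (by positivity) (Real.exp_ne_zero _), Real.log_inv, Real.log_exp]
  ring

lemma log_ratio_sqrt {v₁ v₂ : ℝ≥0} (hv₁ : 0 < v₁) (hv₂ : 0 < v₂) :
    Real.log (√(2*π*(v₂:ℝ))) - Real.log (√(2*π*(v₁:ℝ)))
      = Real.log ((v₂:ℝ)/(v₁:ℝ)) / 2 := by
  have h1 : (0:ℝ) < 2*π*(v₁:ℝ) := by positivity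
  have h2 : (0:ℝ) < 2*π*(v₂:ℝ) := by positivity
  rw [Real.log_sqrt h1.le, Real.log_sqrt h2.le, div_sub_div_same, ← Real.log_div h2.ne' h1.ne',
    mul_div_mul_left _ _ (by positivity : (2*π : ℝ) ≠ 0)]


theorem stmt_6 (μ₁ μ₂ : ℝ) (v₁ v₂ : ℝ≥0) (hv₁ : 0 < v₁) (hv₂ : 0 < v₂) :
    klDiv (gaussianReal μ₁ v₁) (gaussianReal μ₂ v₂) =
      ENNReal.ofReal ((1 / 2) * Real.log ((v₂ : ℝ) / (v₁ : ℝ))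
        + (1 / 2) * ((v₁ : ℝ) / (v₂ : ℝ) - 1)
        + (μ₁ - μ₂) ^ 2 / (2 * (v₂ : ℝ))) := by
  have hv₁' : v₁ ≠ 0 := hv₁.ne'
  have hv₂' : v₂ ≠ 0 := hv₂.ne'
  have hv₁R : (0:ℝ) < (v₁:ℝ) := hv₁
  have hv₂R : (0:ℝ) < (v₂:ℝ) := hv₂
  set P := gaussianReal μ₁ v₁ with hP
  set Q := gaussianReal μ₂ v₂ with hQ
  have hacv : P ≪ volume := gaussianReal_absolutelyContinuous μ₁ hv₁'
  have hac : P ≪ Q := hacv.trans (gaussianReal_absolutelyContinuous' μ₂ hv₂')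
  set F : ℝ → ℝ := fun x => Real.log ((v₂:ℝ)/(v₁:ℝ)) / 2
    + (x - μ₂)^2 / (2*(v₂:ℝ)) - (x - μ₁)^2 / (2*(v₁:ℝ)) with hF
  -- ae equality
  have hrn : (fun x => Real.log ((P.rnDeriv Q x).toReal)) =ᵐ[volume] F := by
    have h1 : P.rnDeriv Q =ᵐ[volume] fun x => (gaussianPDF μ₂ v₂ x)⁻¹ * P.rnDeriv volume x := by
      rw [hQ, gaussianReal_of_var_ne_zero μ₂ hv₂']
      exact Measure.rnDeriv_withDensity_right P volume
        (measurable_gaussianPDF μ₂ v₂).aemeasurable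
        (ae_of_all _ fun x => (gaussianPDF_pos μ₂ hv₂' x).ne')
        (ae_of_all _ fun x => ENNReal.ofReal_ne_top)
    have h2 := rnDeriv_gaussianReal μ₁ v₁
    filter_upwards [h1, h2] with x hx1 hx2
    rw [hx1, hx2, gaussianPDF, gaussianPDF, ENNReal.toReal_mul, ENNReal.toReal_inv,
      ENNReal.toReal_ofReal (gaussianPDFReal_nonneg _ _ _),
      ENNReal.toReal_ofReal (gaussianPDFReal_nonneg _ _ _)]
    have hp1 : 0 < gaussianPDFReal μ₁ v₁ x := gaussianPDFReal_pos μ₁ v₁ x hv₁'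
    have hp2 : 0 < gaussianPDFReal μ₂ v₂ x := gaussianPDFReal_pos μ₂ v₂ x hv₂'
    rw [Real.log_mul (by positivity) hp1.ne', Real.log_inv,
      log_gaussianPDFReal hv₁ μ₁ x, log_gaussianPDFReal hv₂ μ₂ x, hF]
    have := log_ratio_sqrt hv₁ hv₂
    simp only
    linarith
  -- integrability of F w.r.t. P
  have hIntF : Integrable F P := by
    rw [hP, integrable_gaussianReal_iff hv₁']
    have h := integrable_quad_mul_gaussianPDFReal hv₁ μ₁
      (1/(2*(v₂:ℝ)) - 1/(2*(v₁:ℝ))) (μ₁/(v₁:ℝ) - μ₂/(v₂:ℝ))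
      (Real.log ((v₂:ℝ)/(v₁:ℝ))/2 + μ₂^2/(2*(v₂:ℝ)) - μ₁^2/(2*(v₁:ℝ)))
    refine h.congr (Filter.Eventually.of_forall fun x => ?_)
    rw [hF]
    field_simp
    ring
  -- value of the integral
  have hIntVal : ∫ x, F x ∂P = Real.log ((v₂:ℝ)/(v₁:ℝ))/2
      + (v₁:ℝ)/(2*(v₂:ℝ)) - 1/2 + (μ₁-μ₂)^2/(2*(v₂:ℝ)) := by
    rw [hP, integral_gaussianReal_shift hv₁' F]
    have hcong : (fun y : ℝ => F (y + μ₁) * gaussianPDFReal 0 v₁ y)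
        = fun y => ((1/(2*(v₂:ℝ)) - 1/(2*(v₁:ℝ))) * y^2 + ((μ₁-μ₂)/(v₂:ℝ)) * y
          + (Real.log ((v₂:ℝ)/(v₁:ℝ))/2 + (μ₁-μ₂)^2/(2*(v₂:ℝ))))
          * gaussianPDFReal 0 v₁ y := by
      ext y
      rw [hF]
      congr 1
      field_simp
      ring
    rw [hcong, integral_quad_mul_gaussianPDFReal_zero hv₁]
    field_simp
    ring
  have hrnP : (fun x => Real.log ((P.rnDeriv Q x).toReal)) =ᵐ[P] F := hacv.ae_eq hrn
  have hInt : Integrable (fun x => Real.log ((P.rnDeriv Q x).toReal)) P := hIntF.congr hrnP.symm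
  unfold klDiv
  rw [if_pos ⟨hac, hInt⟩]
  congr 1
  rw [integral_congr_ae hrnP, hIntVal]
  ring
end

section
/- Let f₀ and f₁ be probability densities on ℝ^L with D(f₁‖f₀) < ∞. Then lim_{β→0⁺} D(β·f₁ + (1−β)·f₀ ‖ f₀)/β = 0. -/
open MeasureTheory ProbabilityTheory
open scoped ENNReal NNReal

section aux

open Real Filter
open scoped Topology

lemma lb_aux {t : ℝ} (ht : 0 ≤ 1 + t) : t ≤ (1 + t) * Real.log (1 + t) := by
  rcases eq_or_lt_of_le ht with h | h
  · have : t = -1 := by linarith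
    simp [this]
  · have h1 : Real.log (1 + t)⁻¹ ≤ (1 + t)⁻¹ - 1 :=
      Real.log_le_sub_one_of_pos (by positivity)
    rw [Real.log_inv] at h1
    have h2 : (1 + t) * (1 + t)⁻¹ = 1 := mul_inv_cancel₀ (ne_of_gt h)
    nlinarith [mul_le_mul_of_nonneg_left h1 (le_of_lt h)]

lemma ub_aux {u β : ℝ} (hu : -1 ≤ u) (hβ : 0 < β) (hβ1 : β ≤ 1) :
    (1 + β * u) * Real.log (1 + β * u) ≤ β * ((1 + u) * Real.log (1 + u)) := by
  have h := Real.convexOn_mul_log.2 (Set.mem_Ici.mpr zero_le_one)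
    (Set.mem_Ici.mpr (by linarith : (0:ℝ) ≤ 1 + u)) (by linarith : (0:ℝ) ≤ 1 - β)
    hβ.le (by ring)
  simp only [smul_eq_mul, Real.log_one, mul_one] at h
  have e : 1 - β + β * (1 + u) = 1 + β * u := by ring
  rw [e] at h
  nlinarith [h]

lemma bound_aux {u β : ℝ} (hu : -1 ≤ u) (hβ : 0 < β) (hβ1 : β ≤ 1) :
    |(1 + β * u) * Real.log (1 + β * u)| ≤ β * (|u| + |(1 + u) * Real.log (1 + u)|) := by
  have hβu : 0 ≤ 1 + β * u := by nlinarith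
  have hlow : β * u ≤ (1 + β * u) * Real.log (1 + β * u) := lb_aux hβu
  have hup := ub_aux hu hβ hβ1
  rw [abs_le]
  constructor
  · nlinarith [abs_nonneg u, abs_nonneg ((1+u) * Real.log (1+u)), neg_abs_le u]
  · nlinarith [abs_nonneg u, abs_nonneg ((1+u) * Real.log (1+u)),
      le_abs_self ((1+u) * Real.log (1+u))]

lemma lim_aux (u : ℝ) :
    Tendsto (fun β : ℝ => (1 + β * u) * Real.log (1 + β * u) / β)
      (nhdsWithin 0 (Set.Ioi 0)) (𝓝 u) := by
  have hd : HasDerivAt (fun β : ℝ => Real.log (1 + β * u)) u 0 := by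
    have h1 : HasDerivAt (fun β : ℝ => 1 + β * u) u 0 :=
      (hasDerivAt_mul_const u).const_add 1
    have h2 := (Real.hasDerivAt_log (by norm_num : (1:ℝ) + 0 * u ≠ 0)).comp 0 h1
    simpa [Function.comp_def] using h2
  have hs : Tendsto (fun β : ℝ => Real.log (1 + β * u) / β)
      (nhdsWithin 0 {(0:ℝ)}ᶜ) (𝓝 u) := by
    have := hasDerivAt_iff_tendsto_slope.mp hd
    refine this.congr (fun β => ?_)
    simp [slope_def_field]
  have hs' : Tendsto (fun β : ℝ => Real.log (1 + β * u) / β)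
      (nhdsWithin 0 (Set.Ioi 0)) (𝓝 u) :=
    hs.mono_left (nhdsWithin_mono _ (fun x hx => ne_of_gt hx))
  have hc : Tendsto (fun β : ℝ => 1 + β * u) (nhdsWithin 0 (Set.Ioi 0)) (𝓝 1) := by
    have : Continuous (fun β : ℝ => 1 + β * u) := by continuity
    have := this.tendsto 0
    simp only [zero_mul, add_zero] at this
    exact this.mono_left nhdsWithin_le_nhds
  have := hc.mul hs'
  rw [one_mul] at this
  exact this.congr (fun β => (mul_div_assoc _ _ _).symm)

lemma core {X : Type*} [MeasurableSpace X] (Q : Measure X) [IsProbabilityMeasure Q]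
    (r : X → ℝ) (hrm : Measurable r) (hr0 : ∀ x, 0 ≤ r x)
    (hr1 : ∫ x, r x ∂Q = 1)
    (hrl : Integrable (fun x => r x * Real.log (r x)) Q) :
    Tendsto (fun β : ℝ =>
        (∫ x, (1 + β * (r x - 1)) * Real.log (1 + β * (r x - 1)) ∂Q) / β)
      (nhdsWithin 0 (Set.Ioi 0)) (𝓝 0) := by
  have hri : Integrable r Q := by
    by_contra h
    rw [integral_undef h] at hr1; norm_num at hr1
  have hui : Integrable (fun x => r x - 1) Q := hri.sub (integrable_const 1)
  have hgi : Integrable (fun x => |r x - 1| + |r x * Real.log (r x)|) Q :=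
    hui.abs.add hrl.abs
  have key : Tendsto (fun β : ℝ =>
      ∫ x, (1 + β * (r x - 1)) * Real.log (1 + β * (r x - 1)) / β ∂Q)
      (nhdsWithin 0 (Set.Ioi 0)) (𝓝 (∫ x, r x - 1 ∂Q)) := by
    apply tendsto_integral_filter_of_dominated_convergence
      (fun x => |r x - 1| + |r x * Real.log (r x)|)
    · filter_upwards with β
      exact ((((measurable_const.add ((hrm.sub measurable_const).const_mul β)).mul
        ((measurable_const.add
          ((hrm.sub measurable_const).const_mul β)).log)).div_const β)).aestronglyMeasurable
    · filter_upwards [Ioc_mem_nhdsGT_of_mem (Set.mem_Ico.mpr ⟨le_refl (0:ℝ), one_pos⟩)]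
        with β hβ
      filter_upwards with x
      obtain ⟨hβ0, hβ1⟩ := hβ
      have hu1 : -1 ≤ r x - 1 := by have := hr0 x; linarith
      have hb := bound_aux hu1 hβ0 hβ1
      have hru : 1 + (r x - 1) = r x := by ring
      rw [hru] at hb
      rw [Real.norm_eq_abs, abs_div, abs_of_pos hβ0, div_le_iff₀ hβ0]
      linarith [hb]
    · exact hgi
    · filter_upwards with x
      exact lim_aux (r x - 1)
  have hz : (∫ x, r x - 1 ∂Q) = 0 := by
    rw [integral_sub hri (integrable_const 1), hr1]
    simp
  rw [hz] at key
  exact key.congr (fun β => (integral_div β _))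

end aux

theorem stmt_8 (L : ℕ) (f₀ f₁ : (Fin L → ℝ) → ℝ)
    (hf₀m : Measurable f₀) (hf₁m : Measurable f₁)
    (hf₀ : ∀ x, 0 ≤ f₀ x) (hf₁ : ∀ x, 0 ≤ f₁ x)
    (hf₀1 : ∫ x, f₀ x = 1) (hf₁1 : ∫ x, f₁ x = 1)
    (hfin : klDiv (volume.withDensity fun x => ENNReal.ofReal (f₁ x))
        (volume.withDensity fun x => ENNReal.ofReal (f₀ x)) < ⊤) :
    Filter.Tendsto
      (fun β : ℝ =>
        (klDiv (volume.withDensity fun x => ENNReal.ofReal (β * f₁ x + (1 - β) * f₀ x))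
            (volume.withDensity fun x => ENNReal.ofReal (f₀ x))).toReal / β)
      (nhdsWithin 0 (Set.Ioi 0)) (nhds 0) := by
  set Q : Measure (Fin L → ℝ) := volume.withDensity (fun x => ENNReal.ofReal (f₀ x)) with hQ
  set P : Measure (Fin L → ℝ) := volume.withDensity (fun x => ENNReal.ofReal (f₁ x)) with hP
  -- integrability of densities
  have hint₀ : Integrable f₀ (volume : Measure (Fin L → ℝ)) := by
    by_contra h
    rw [integral_undef h] at hf₀1; norm_num at hf₀1
  have hint₁ : Integrable f₁ (volume : Measure (Fin L → ℝ)) := by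
    by_contra h
    rw [integral_undef h] at hf₁1; norm_num at hf₁1
  -- probability measures
  have hQp : IsProbabilityMeasure Q := by
    constructor
    rw [hQ, withDensity_apply _ MeasurableSet.univ, setLIntegral_univ,
      ← ofReal_integral_eq_lintegral_ofReal hint₀ (ae_of_all _ hf₀), hf₀1, ENNReal.ofReal_one]
  have hPp : IsProbabilityMeasure P := by
    constructor
    rw [hP, withDensity_apply _ MeasurableSet.univ, setLIntegral_univ,
      ← ofReal_integral_eq_lintegral_ofReal hint₁ (ae_of_all _ hf₁), hf₁1, ENNReal.ofReal_one]
  -- extract the klDiv condition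
  have hc : P ≪ Q ∧ Integrable (fun x => Real.log ((P.rnDeriv Q x).toReal)) P := by
    by_contra h
    unfold klDiv at hfin
    rw [if_neg h] at hfin
    exact lt_irrefl _ hfin
  -- f₁ vanishes a.e. where f₀ does
  have hs0 : MeasurableSet {x : Fin L → ℝ | f₀ x = 0} := hf₀m (measurableSet_singleton 0)
  have h10 : ∀ᵐ x ∂(volume : Measure (Fin L → ℝ)), f₀ x = 0 → f₁ x = 0 := by
    have hQs : Q {x | f₀ x = 0} = 0 := by
      rw [hQ, withDensity_apply _ hs0]
      have : ∀ᵐ x ∂(volume.restrict {x : Fin L → ℝ | f₀ x = 0}),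
          ENNReal.ofReal (f₀ x) = 0 := by
        filter_upwards [ae_restrict_mem hs0] with x hx
        simp [hx]
      rw [lintegral_congr_ae this, lintegral_zero]
    have hPs : P {x | f₀ x = 0} = 0 := hc.1 hQs
    rw [hP, withDensity_apply _ hs0] at hPs
    have h1 := (lintegral_eq_zero_iff (hf₁m.ennreal_ofReal)).mp hPs
    have h2 : ∀ᵐ x ∂((volume : Measure (Fin L → ℝ)).restrict {x | f₀ x = 0}),
        ENNReal.ofReal (f₁ x) = 0 := by
      filter_upwards [h1] with x hx
      simpa using hx
    rw [ae_restrict_iff' hs0] at h2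
    filter_upwards [h2] with x hx hx0
    have h3 := hx hx0
    rw [ENNReal.ofReal_eq_zero] at h3
    exact le_antisymm h3 (hf₁ x)
  -- the likelihood ratio
  set r : (Fin L → ℝ) → ℝ := fun x => if f₀ x = 0 then 0 else f₁ x / f₀ x with hr
  have hrm : Measurable r := Measurable.ite hs0 measurable_const (hf₁m.div hf₀m)
  have hr0 : ∀ x, 0 ≤ r x := by
    intro x
    rw [hr]
    dsimp only
    split
    · exact le_refl 0
    · exact div_nonneg (hf₁ x) (hf₀ x)
  -- key density identity
  have hkey : ∀ᵐ x ∂(volume : Measure (Fin L → ℝ)),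
      ((fun x => ENNReal.ofReal (f₀ x)) * fun x => ENNReal.ofReal (r x)) x
        = ENNReal.ofReal (f₁ x) := by
    filter_upwards [h10] with x hx
    simp only [Pi.mul_apply]
    by_cases h : f₀ x = 0
    · simp [hr, h, hx h]
    · rw [← ENNReal.ofReal_mul (hf₀ x)]
      congr 1
      rw [hr]
      simp only [h, if_false]
      field_simp
  have hPQ : Q.withDensity (fun x => ENNReal.ofReal (r x)) = P := by
    rw [hQ, hP, ← withDensity_mul _ hf₀m.ennreal_ofReal hrm.ennreal_ofReal]
    exact withDensity_congr_ae hkey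
  -- ∫ r dQ = 1
  set rn : (Fin L → ℝ) → ℝ≥0 := fun x => Real.toNNReal (r x) with hrn
  have hrnm : Measurable rn := measurable_real_toNNReal.comp hrm
  have hrncoe : (fun x => ((rn x : ℝ≥0) : ℝ≥0∞)) = fun x => ENNReal.ofReal (r x) := rfl
  have hr1 : ∫ x, r x ∂Q = 1 := by
    have h1 := integral_withDensity_eq_integral_smul (μ := Q) hrnm (fun _ => (1:ℝ))
    rw [hrncoe, hPQ] at h1
    simp only [NNReal.smul_def, smul_eq_mul, mul_one] at h1
    have h2 : ∫ (x : Fin L → ℝ), (1:ℝ) ∂P = 1 := by simp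
    rw [h2] at h1
    rw [h1]
    apply integral_congr_ae
    filter_upwards with x
    rw [hrn]
    exact (Real.coe_toNNReal _ (hr0 x)).symm
  -- Integrable (r log r) Q
  have hrd : P.rnDeriv Q =ᵐ[Q] fun x => ENNReal.ofReal (r x) := by
    rw [← hPQ]
    exact Measure.rnDeriv_withDensity Q hrm.ennreal_ofReal
  have hrdP : P.rnDeriv Q =ᵐ[P] fun x => ENNReal.ofReal (r x) :=
    hrd.filter_mono hc.1.ae_le
  have hlogP : Integrable (fun x => Real.log (r x)) P := by
    apply hc.2.congr
    filter_upwards [hrdP] with x hx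
    rw [hx, ENNReal.toReal_ofReal (hr0 x)]
  have hrl : Integrable (fun x => r x * Real.log (r x)) Q := by
    have h1 : Integrable (fun x => Real.log (r x)) (Q.withDensity fun x => (rn x : ℝ≥0∞)) := by
      rw [hrncoe, hPQ]; exact hlogP
    have h2 := (integrable_withDensity_iff_integrable_smul hrnm).mp h1
    apply h2.congr
    filter_upwards with x
    simp [NNReal.smul_def, hrn, Real.coe_toNNReal _ (hr0 x)]
  -- core convergence
  have tend := core Q r hrm hr0 hr1 hrl
  -- auxiliary facts for the final identification
  have hri : Integrable r Q := by
    by_contra h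
    rw [integral_undef h] at hr1; norm_num at hr1
  have hui : Integrable (fun x => r x - 1) Q := hri.sub (integrable_const 1)
  have hgi : Integrable (fun x => |r x - 1| + |r x * Real.log (r x)|) Q :=
    hui.abs.add hrl.abs
  have hz : (∫ x, r x - 1 ∂Q) = 0 := by
    rw [integral_sub hri (integrable_const 1), hr1]; simp
  -- identify the klDiv expression for β ∈ Ioc 0 1
  refine tend.congr' ?_
  filter_upwards [Ioc_mem_nhdsGT_of_mem (Set.mem_Ico.mpr ⟨le_refl (0:ℝ), one_pos⟩)]
    with β hβ
  obtain ⟨hβ0, hβ1⟩ := hβ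
  set g : (Fin L → ℝ) → ℝ := fun x => 1 + β * (r x - 1) with hg
  have hgm : Measurable g := measurable_const.add ((hrm.sub measurable_const).const_mul β)
  have hg0 : ∀ x, 0 ≤ g x := by
    intro x
    have := hr0 x
    rw [hg]
    dsimp only
    nlinarith
  -- the mixture measure as withDensity over Q
  have hMkey : ∀ᵐ x ∂(volume : Measure (Fin L → ℝ)),
      ((fun x => ENNReal.ofReal (f₀ x)) * fun x => ENNReal.ofReal (g x)) x
        = ENNReal.ofReal (β * f₁ x + (1 - β) * f₀ x) := by
    filter_upwards [h10] with x hx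
    simp only [Pi.mul_apply]
    by_cases h : f₀ x = 0
    · simp [h, hx h]
    · rw [← ENNReal.ofReal_mul (hf₀ x)]
      congr 1
      rw [hg]
      simp only
      rw [hr]
      simp only [h, if_false]
      field_simp
      ring
  have hMQ : volume.withDensity (fun x => ENNReal.ofReal (β * f₁ x + (1 - β) * f₀ x))
      = Q.withDensity (fun x => ENNReal.ofReal (g x)) := by
    rw [hQ, ← withDensity_mul _ hf₀m.ennreal_ofReal hgm.ennreal_ofReal]
    exact (withDensity_congr_ae hMkey).symm
  have hMac : (Q.withDensity fun x => ENNReal.ofReal (g x)) ≪ Q :=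
    withDensity_absolutelyContinuous Q _
  have hrdM : (Q.withDensity fun x => ENNReal.ofReal (g x)).rnDeriv Q
      =ᵐ[Q] fun x => ENNReal.ofReal (g x) :=
    Measure.rnDeriv_withDensity Q hgm.ennreal_ofReal
  have hrdM' : (Q.withDensity fun x => ENNReal.ofReal (g x)).rnDeriv Q
      =ᵐ[Q.withDensity fun x => ENNReal.ofReal (g x)] fun x => ENNReal.ofReal (g x) :=
    hrdM.filter_mono hMac.ae_le
  have heq : (fun x => Real.log
        (((Q.withDensity fun x => ENNReal.ofReal (g x)).rnDeriv Q x).toReal))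
      =ᵐ[Q.withDensity fun x => ENNReal.ofReal (g x)] fun x => Real.log (g x) := by
    filter_upwards [hrdM'] with x hx
    rw [hx, ENNReal.toReal_ofReal (hg0 x)]
  -- integrability of φ_β w.r.t. Q
  have hIβ : Integrable (fun x => g x * Real.log (g x)) Q := by
    apply Integrable.mono' (hgi.const_mul β)
      ((hgm.mul hgm.log).aestronglyMeasurable)
    filter_upwards with x
    have hu1 : -1 ≤ r x - 1 := by have := hr0 x; linarith
    have hb := bound_aux hu1 hβ0 hβ1
    have hru : 1 + (r x - 1) = r x := by ring
    rw [hru] at hb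
    rw [Real.norm_eq_abs, hg]
    exact hb
  -- integrability w.r.t. M
  set gn : (Fin L → ℝ) → ℝ≥0 := fun x => Real.toNNReal (g x) with hgn
  have hgnm : Measurable gn := measurable_real_toNNReal.comp hgm
  have hgncoe : (fun x => ((gn x : ℝ≥0) : ℝ≥0∞)) = fun x => ENNReal.ofReal (g x) := rfl
  have hIM : Integrable (fun x => Real.log (g x))
      (Q.withDensity fun x => ENNReal.ofReal (g x)) := by
    rw [← hgncoe]
    apply (integrable_withDensity_iff_integrable_smul hgnm).mpr
    apply hIβ.congr
    filter_upwards with x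
    simp [NNReal.smul_def, hgn, Real.coe_toNNReal _ (hg0 x)]
  have hcond : (Q.withDensity fun x => ENNReal.ofReal (g x)) ≪ Q ∧
      Integrable (fun x => Real.log
        (((Q.withDensity fun x => ENNReal.ofReal (g x)).rnDeriv Q x).toReal))
        (Q.withDensity fun x => ENNReal.ofReal (g x)) :=
    ⟨hMac, hIM.congr heq.symm⟩
  -- evaluate klDiv
  have hkl : klDiv (Q.withDensity fun x => ENNReal.ofReal (g x)) Q
      = ENNReal.ofReal (∫ x, g x * Real.log (g x) ∂Q) := by
    unfold klDiv
    rw [if_pos hcond]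
    congr 1
    rw [integral_congr_ae heq, ← hgncoe, integral_withDensity_eq_integral_smul hgnm]
    apply integral_congr_ae
    filter_upwards with x
    simp [NNReal.smul_def, hgn, Real.coe_toNNReal _ (hg0 x)]
  -- nonnegativity of the integral
  have hpos : 0 ≤ ∫ x, g x * Real.log (g x) ∂Q := by
    have h1 : ∫ x, β * (r x - 1) ∂Q = 0 := by
      rw [integral_const_mul, hz, mul_zero]
    rw [← h1]
    apply integral_mono (hui.const_mul β) hIβ
    intro x
    have hu1 : -1 ≤ r x - 1 := by have := hr0 x; linarith
    have : 0 ≤ 1 + β * (r x - 1) := by nlinarith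
    have := lb_aux (t := β * (r x - 1)) this
    rw [hg]
    dsimp only
    linarith
  -- conclude
  rw [hMQ, hkl, ENNReal.toReal_ofReal hpos]
end
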